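/- Let A be a Poisson algebra over k whose underlying ring is a regular local k-algebra of Krull dimension ℓ with regular system of parameters x_1,…,x_ℓ, and suppose dx_1,…,dx_ℓ is a free A-basis of the module of Kähler differentials Ω_A. Write d{x_i,x_j} = Σ_{k=1}^{ℓ} a_{ijk} dx_k with a_{ijk} ∈ A. Define δ : A → A by the condition δ(a)·(dx_1∧⋯∧dx_ℓ) = Σ_{i=1}^{ℓ} (−1)^{i+1} d({a,x_i}) ∧ dx_1∧⋯∧(dx_i omitted)∧⋯∧dx_ℓ in ⋀^ℓ_A Ω_A. Then δ is a Poisson derivation of A, and δ(x_i) = Σ_{j=1}^{ℓ} a_{ijj} for each i = 1,…,ℓ. -/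

import Mathlib

/-! ### Basic Poisson algebra notions -/

/-- A Poisson algebra structure on a commutative `k`-algebra `A`:
a `k`-bilinear Lie bracket satisfying the Leibniz rule. -/
structure PoissonAlgebra (k A : Type*) [CommRing k] [CommRing A] [Algebra k A] where
  br : A →ₗ[k] A →ₗ[k] A
  skew : ∀ a b, br a b = - br b a
  jacobi : ∀ a b c, br a (br b c) + br b (br c a) + br c (br a b) = 0
  leibniz : ∀ a b c, br (a * b) c = a * br b c + br a c * b

/-- A left Poisson module structure on an `A`-module `M`, with bracket `br a m = {a, m}`. -/
structure LeftPMod {k A : Type*} [CommRing k] [CommRing A] [Algebra k A]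
    (P : PoissonAlgebra k A) (M : Type*) [AddCommGroup M] [Module k M] [Module A M]
    [IsScalarTower k A M] where
  br : A →ₗ[k] M →ₗ[k] M
  lie : ∀ a b m, br (P.br a b) m = br a (br b m) - br b (br a m)
  mul : ∀ a b m, br (a * b) m = a • br b m + b • br a m
  act : ∀ a b m, br a (b • m) = P.br a b • m + b • br a m

/-- A right Poisson module structure on an `A`-module `M`, with bracket `br m a = {m, a}`. -/
structure RightPMod {k A : Type*} [CommRing k] [CommRing A] [Algebra k A]
    (P : PoissonAlgebra k A) (M : Type*) [AddCommGroup M] [Module k M] [Module A M]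
    [IsScalarTower k A M] where
  br : M →ₗ[k] A →ₗ[k] M
  lie : ∀ m a b, br m (P.br a b) = br (br m a) b - br (br m b) a
  mul : ∀ m a b, br m (a * b) = a • br m b + b • br m a
  act : ∀ b m a, br (b • m) a = P.br b a • m + b • br m a

/-- A Poisson derivation of a Poisson algebra. -/
structure PoissonDerivation {k A : Type*} [CommRing k] [CommRing A] [Algebra k A]
    (P : PoissonAlgebra k A) where
  d : A →ₗ[k] A
  leibniz : ∀ a b, d (a * b) = a * d b + d a * b
  compat : ∀ a b, d (P.br a b) = P.br (d a) b + P.br a (d b)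

/-- A log-Hamiltonian derivation is one of the form `a ↦ u⁻¹ * {u, a}` for a unit `u`. -/
def PoissonDerivation.IsLogHamiltonian {k A : Type*} [CommRing k] [CommRing A] [Algebra k A]
    {P : PoissonAlgebra k A} (δ : PoissonDerivation P) : Prop :=
  ∃ u : Aˣ, ∀ a : A, (u : A) * δ.d a = P.br (u : A) a

section Aux
variable {k A : Type*} [CommRing k] [CommRing A] [Algebra k A]

/-- The Hamiltonian derivation `c ↦ {a, c}`. -/
def PoissonAlgebra.ham (P : PoissonAlgebra k A) (a : A) : Derivation k A A where
  toLinearMap := P.br a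
  map_one_eq_zero' := by
    have h1 : P.br 1 a = 0 := by
      have h := P.leibniz 1 1 a
      rw [one_mul, one_mul, mul_one] at h
      have h0 : P.br 1 a + 0 = P.br 1 a + P.br 1 a := by rw [add_zero]; exact h
      exact (add_left_cancel h0).symm
    show P.br a 1 = 0
    rw [P.skew a 1, h1, neg_zero]
  leibniz' := fun u v => by
    show P.br a (u * v) = u • P.br a v + v • P.br a u
    rw [smul_eq_mul, smul_eq_mul, P.skew a (u * v), P.leibniz u v a, P.skew a v, P.skew a u]
    ring

@[simp] lemma PoissonAlgebra.ham_apply (P : PoissonAlgebra k A) (a c : A) :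
    P.ham a c = P.br a c := rfl

lemma basis_det_update {ι : Type*} [Fintype ι] [DecidableEq ι] {R M : Type*} [CommRing R]
    [AddCommGroup M] [Module R M] (e : Module.Basis ι R M) (i : ι) (w : M) :
    e.det (Function.update (⇑e) i w) = e.repr w i := by
  conv_lhs => rw [← Module.Basis.sum_repr e w]
  rw [AlternatingMap.map_update_sum]
  rw [Finset.sum_eq_single i]
  · rw [AlternatingMap.map_update_smul, Function.update_eq_self, Module.Basis.det_self, smul_eq_mul,
      mul_one]
  · intro j _ hj
    rw [AlternatingMap.map_update_smul]
    have hz : e.det (Function.update (⇑e) i (e j)) = 0 :=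
      AlternatingMap.map_eq_zero_of_eq _ _
        (by rw [Function.update_self, Function.update_of_ne hj]) (Ne.symm hj)
    rw [hz, smul_zero]
  · intro h; exact absurd (Finset.mem_univ i) h

lemma derivation_rep {ℓ : ℕ} (b : Module.Basis (Fin ℓ) A (Ω[A⁄k])) (x : Fin ℓ → A)
    (hb : ∀ i, b i = KaehlerDifferential.D k A (x i)) (θ : Derivation k A A) (c : A) :
    θ c = ∑ j, b.repr (KaehlerDifferential.D k A c) j * θ (x j) := by
  conv_lhs => rw [← Derivation.liftKaehlerDifferential_comp_D θ c,
    ← Module.Basis.sum_repr b (KaehlerDifferential.D k A c)]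
  rw [map_sum]
  refine Finset.sum_congr rfl fun j _ => ?_
  rw [map_smul, hb j, Derivation.liftKaehlerDifferential_comp_D, smul_eq_mul]

end Aux

/-! ### STATEMENT 13:
Let `A` be a Poisson algebra whose underlying ring is a regular local `k`-algebra of
Krull dimension `ℓ` with regular system of parameters `x 0, …, x (ℓ-1)` (i.e. the `x i`
generate the maximal ideal), and suppose the `d (x i)` form a free `A`-basis `b` of
`Ω[A⁄k]`.  Write `d {x i, x j} = ∑ t, a i j t • d (x t)` (so `a i j t` is the `t`-th
coordinate of `d {x i, x j}` in the basis `b`).  Define `δ : A → A` by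
`δ(a) • (dx_0 ∧ ⋯ ∧ dx_{ℓ-1}) = ∑ i, (-1)^{i} • (d {a, x i} ∧ dx_0 ∧ ⋯ ∧ (omit i) ∧ ⋯)`,
which (moving `d {a, x i}` from the front into the `i`-th slot, picking up the sign
`(-1)^i`) is equivalently written with `Function.update`:
`δ(a) • ιMulti(v) = ∑ i, ιMulti (Function.update v i (d {a, x i}))`,
where `v i = d (x i)`.  Then `δ` is a Poisson derivation and `δ (x i) = ∑ j, a i j j`. -/
theorem stmt_13 {k A : Type*} [Field k] [IsAlgClosed k] [CharZero k]
    [CommRing A] [Algebra k A] (P : PoissonAlgebra k A)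
    [IsLocalRing A] [IsNoetherianRing A] (ℓ : ℕ)
    (hdim : ringKrullDim A = ℓ)
    (x : Fin ℓ → A) (hx : Ideal.span (Set.range x) = IsLocalRing.maximalIdeal A)
    (b : Module.Basis (Fin ℓ) A (Ω[A⁄k])) (hb : ∀ i, b i = KaehlerDifferential.D k A (x i))
    (a : Fin ℓ → Fin ℓ → Fin ℓ → A)
    (ha : ∀ i j, KaehlerDifferential.D k A (P.br (x i) (x j)) = ∑ t, a i j t • b t)
    (δ : A → A)
    (hδ : ∀ c : A,
      δ c • ExteriorAlgebra.ιMulti A ℓ (fun i => KaehlerDifferential.D k A (x i))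
        = ∑ i : Fin ℓ, ExteriorAlgebra.ιMulti A ℓ
            (Function.update (fun j => KaehlerDifferential.D k A (x j)) i
              (KaehlerDifferential.D k A (P.br c (x i))))) :
    (∃ D : PoissonDerivation P, ∀ c, D.d c = δ c) ∧
    (∀ i, δ (x i) = ∑ j, a i j j) := by
  classical
  -- partial derivatives
  set par : Fin ℓ → Derivation k A A :=
    fun i => (b.coord i).compDer (KaehlerDifferential.D k A) with hpar
  have par_apply : ∀ (i : Fin ℓ) (c : A),
      par i c = b.repr (KaehlerDifferential.D k A c) i := fun i c => rfl
  have rep : ∀ (θ : Derivation k A A) (c : A), θ c = ∑ j, par j c * θ (x j) := by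
    intro θ c
    rw [derivation_rep b x hb θ c]
    exact Finset.sum_congr rfl fun j _ => by rw [par_apply]
  -- the formula for δ
  have hv : (fun i : Fin ℓ => KaehlerDifferential.D k A (x i)) = ⇑b :=
    funext fun i => (hb i).symm
  have hδ' : ∀ c, δ c = ∑ i, par i (P.br c (x i)) := by
    intro c
    have h := hδ c
    rw [hv] at h
    have h2 := congrArg (ExteriorAlgebra.liftAlternating
      (Function.update (fun n => (0 : (Ω[A⁄k]) [⋀^Fin n]→ₗ[A] A)) ℓ b.det)) h
    rw [map_smul, map_sum] at h2
    simp only [ExteriorAlgebra.liftAlternating_apply_ιMulti, Function.update_self] at h2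
    rw [Module.Basis.det_self, smul_eq_mul, mul_one] at h2
    simp only [basis_det_update] at h2
    rw [h2]
    exact Finset.sum_congr rfl fun i _ => (par_apply i _).symm
  -- claim 2
  have claim2 : ∀ i, δ (x i) = ∑ j, a i j j := by
    intro i
    rw [hδ' (x i)]
    refine Finset.sum_congr rfl fun j _ => ?_
    rw [par_apply, ha i j]
    simp [Finsupp.single_apply]
  refine ⟨?_, claim2⟩
  -- partial derivatives on coordinates
  have hx' : ∀ (i t : Fin ℓ), par i (x t) = if t = i then 1 else 0 := by
    intro i t
    rw [par_apply, ← hb t, Module.Basis.repr_self, Finsupp.single_apply]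
  -- commutation of partial derivatives
  have comm : ∀ (i j : Fin ℓ) (c : A), par i (par j c) = par j (par i c) := by
    intro i j c
    have hz : ∀ t, ⁅par i, par j⁆ (x t) = 0 := by
      intro t
      rw [Derivation.commutator_apply, hx' j t, hx' i t]
      split_ifs <;> simp
    have hbr : ⁅par i, par j⁆ c = 0 := by
      rw [rep ⁅par i, par j⁆ c]
      simp [hz]
    rw [Derivation.commutator_apply] at hbr
    exact sub_eq_zero.mp hbr
  -- the derivation as a linear map
  set dmap : A →ₗ[k] A := ∑ i : Fin ℓ, (par i).toLinearMap ∘ₗ (P.br.flip (x i)) with hdmap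
  have dmap_apply : ∀ c, dmap c = ∑ i, par i (P.br c (x i)) := by
    intro c
    rw [hdmap]
    simp [LinearMap.sum_apply]
  -- Leibniz rule
  have leib : ∀ u v, dmap (u * v) = u * dmap v + dmap u * v := by
    intro u v
    have h3 : ∑ i, P.br v (x i) * par i u = P.br v u := by
      have h := rep (P.ham v) u
      simp only [PoissonAlgebra.ham_apply] at h
      rw [h]
      exact Finset.sum_congr rfl fun i _ => mul_comm _ _
    have h4 : ∑ i, P.br u (x i) * par i v = P.br u v := by
      have h := rep (P.ham u) v
      simp only [PoissonAlgebra.ham_apply] at h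
      rw [h]
      exact Finset.sum_congr rfl fun i _ => mul_comm _ _
    rw [dmap_apply, dmap_apply, dmap_apply]
    have expand : ∀ i : Fin ℓ, par i (P.br (u * v) (x i))
        = u * par i (P.br v (x i)) + v * par i (P.br u (x i))
          + (P.br v (x i) * par i u + P.br u (x i) * par i v) := by
      intro i
      rw [P.leibniz u v (x i), map_add, Derivation.leibniz, Derivation.leibniz]
      simp only [smul_eq_mul]
      ring
    rw [Finset.sum_congr rfl fun i _ => expand i]
    rw [Finset.sum_add_distrib, Finset.sum_add_distrib, Finset.sum_add_distrib, h3, h4,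
      ← Finset.mul_sum, ← Finset.mul_sum]
    rw [P.skew u v]
    ring
  -- key exchange identity
  have key : ∀ u w : A, ∑ i, par i (P.br u (P.br w (x i)))
      = P.br u (∑ i, par i (P.br w (x i)))
        + ∑ i, ∑ j, par j (P.br w (x i)) * par i (P.br u (x j)) := by
    intro u w
    have step1 : ∀ i : Fin ℓ, par i (P.br u (P.br w (x i)))
        = ∑ j, (par j (P.br w (x i)) * par i (P.br u (x j))
            + par i (par j (P.br w (x i))) * P.br u (x j)) := by
      intro i
      have hrep : P.br u (P.br w (x i))
          = ∑ j, par j (P.br w (x i)) * P.br u (x j) := by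
        have := rep (P.ham u) (P.br w (x i))
        simpa using this
      rw [hrep, map_sum]
      refine Finset.sum_congr rfl fun j _ => ?_
      rw [Derivation.leibniz]
      simp only [smul_eq_mul]
      ring
    rw [Finset.sum_congr rfl fun i _ => step1 i]
    simp only [Finset.sum_add_distrib]
    have hsec : ∑ i : Fin ℓ, ∑ j : Fin ℓ, par i (par j (P.br w (x i))) * P.br u (x j)
        = P.br u (∑ i, par i (P.br w (x i))) := by
      have h := rep (P.ham u) (∑ i, par i (P.br w (x i)))
      simp only [PoissonAlgebra.ham_apply] at h
      rw [h, Finset.sum_comm]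
      refine Finset.sum_congr rfl fun j _ => ?_
      rw [map_sum, Finset.sum_mul]
      refine Finset.sum_congr rfl fun i _ => ?_
      rw [comm]
    rw [hsec]
    exact add_comm _ _
  -- compatibility with the bracket
  have compat : ∀ u w, dmap (P.br u w) = P.br (dmap u) w + P.br u (dmap w) := by
    intro u w
    have jac : ∀ i, P.br (P.br u w) (x i)
        = P.br u (P.br w (x i)) - P.br w (P.br u (x i)) := by
      intro i
      have hJ := P.jacobi u w (x i)
      have h0 := P.skew (P.br u w) (x i)
      have h2 : P.br w (P.br (x i) u) = - P.br w (P.br u (x i)) := by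
        rw [P.skew (x i) u, map_neg]
      linear_combination h0 - hJ + h2
    rw [dmap_apply]
    calc ∑ i, par i (P.br (P.br u w) (x i))
        = ∑ i, (par i (P.br u (P.br w (x i))) - par i (P.br w (P.br u (x i)))) := by
          refine Finset.sum_congr rfl fun i _ => ?_
          rw [jac i, map_sub]
      _ = (∑ i, par i (P.br u (P.br w (x i)))) - ∑ i, par i (P.br w (P.br u (x i))) :=
          Finset.sum_sub_distrib _ _
      _ = P.br (dmap u) w + P.br u (dmap w) := by
          rw [key u w, key w u, dmap_apply, dmap_apply]
          have hB : ∑ i : Fin ℓ, ∑ j : Fin ℓ, par j (P.br w (x i)) * par i (P.br u (x j))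
              = ∑ i : Fin ℓ, ∑ j : Fin ℓ, par j (P.br u (x i)) * par i (P.br w (x j)) := by
            rw [Finset.sum_comm]
            exact Finset.sum_congr rfl fun i _ => Finset.sum_congr rfl fun j _ => mul_comm _ _
          rw [hB, P.skew (∑ i, par i (P.br u (x i))) w]
          ring
  exact ⟨⟨dmap, leib, compat⟩, fun c => by rw [dmap_apply c, hδ' c]⟩
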